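/- Let b ∈ (0,1), σ₀ ≠ 0, μ₀ ≠ 0, r ∈ ℝ, let w : ℝ → ℝ be continuously differentiable, and define ĝ₁₁ = 1/σ₀ + r cos²θ, ĝ₁₂ = −(σ₀/μ₀) r cos θ, ĝ₂₂ = b/μ₀ + σ₀² r/μ₀², and V̂(θ,x) = (1/σ₀)(cos θ − 1) + w(x − (μ₀/σ₀) sin θ). Then the potential matching equation (ĝ₂₂ − b cos θ ĝ₁₂) ∂V̂/∂θ + (b cos θ ĝ₁₁ − ĝ₁₂) ∂V̂/∂x = −sin θ (ĝ₁₁ ĝ₂₂ − ĝ₁₂²) holds at every point of ℝ². -/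

import Mathlib

/-!
Statement 9: the controlled metric and the controlled potential
`V̂(θ,x) = (1/σ₀)(cos θ − 1) + w(x − (μ₀/σ₀) sin θ)` satisfy the
potential-energy matching equation of the inverted pendulum cart.
-/

noncomputable section

open Real Set

/-- Partial derivative in the `θ` (first) direction. -/
def pdth (f : ℝ × ℝ → ℝ) (p : ℝ × ℝ) : ℝ := fderiv ℝ f p (1, 0)

/-- Partial derivative in the `x` (second) direction. -/
def pdx (f : ℝ × ℝ → ℝ) (p : ℝ × ℝ) : ℝ := fderiv ℝ f p (0, 1)

theorem statement9 (b σ₀ μ₀ r : ℝ) (hb : b ∈ Ioo (0 : ℝ) 1)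
    (hσ₀ : σ₀ ≠ 0) (hμ₀ : μ₀ ≠ 0)
    (w : ℝ → ℝ) (hw : ContDiff ℝ 1 w)
    (g11 g12 g22 V : ℝ × ℝ → ℝ)
    (hg11 : ∀ p : ℝ × ℝ, g11 p = 1 / σ₀ + r * Real.cos p.1 ^ 2)
    (hg12 : ∀ p : ℝ × ℝ, g12 p = -(σ₀ / μ₀) * r * Real.cos p.1)
    (hg22 : ∀ p : ℝ × ℝ, g22 p = b / μ₀ + σ₀ ^ 2 * r / μ₀ ^ 2)
    (hV : ∀ p : ℝ × ℝ, V p =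
      (1 / σ₀) * (Real.cos p.1 - 1) + w (p.2 - (μ₀ / σ₀) * Real.sin p.1)) :
    ∀ p : ℝ × ℝ,
      (g22 p - b * Real.cos p.1 * g12 p) * pdth V p
        + (b * Real.cos p.1 * g11 p - g12 p) * pdx V p
      = -Real.sin p.1 * (g11 p * g22 p - g12 p ^ 2) := by
  intro p
  set c : ℝ := μ₀ / σ₀ with hc
  have hVfun : V = fun p : ℝ × ℝ =>
      (1 / σ₀) * (Real.cos p.1 - 1) + w (p.2 - c * Real.sin p.1) :=
    funext hV
  set u : ℝ := p.2 - c * Real.sin p.1 with hu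
  set d : ℝ := deriv w u with hd
  -- build the derivative of V at p
  have hfst : HasFDerivAt (fun q : ℝ × ℝ => q.1)
      (ContinuousLinearMap.fst ℝ ℝ ℝ) p := hasFDerivAt_fst
  have hsnd : HasFDerivAt (fun q : ℝ × ℝ => q.2)
      (ContinuousLinearMap.snd ℝ ℝ ℝ) p := hasFDerivAt_snd
  have hcos : HasFDerivAt (fun q : ℝ × ℝ => Real.cos q.1)
      ((-Real.sin p.1) • ContinuousLinearMap.fst ℝ ℝ ℝ) p :=
    (Real.hasDerivAt_cos p.1).comp_hasFDerivAt p hfst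
  have hsin : HasFDerivAt (fun q : ℝ × ℝ => Real.sin q.1)
      ((Real.cos p.1) • ContinuousLinearMap.fst ℝ ℝ ℝ) p :=
    (Real.hasDerivAt_sin p.1).comp_hasFDerivAt p hfst
  have hU : HasFDerivAt (fun q : ℝ × ℝ => q.2 - c * Real.sin q.1)
      (ContinuousLinearMap.snd ℝ ℝ ℝ
        - c • ((Real.cos p.1) • ContinuousLinearMap.fst ℝ ℝ ℝ)) p :=
    hsnd.sub (hsin.const_mul c)
  have hwdiff : HasDerivAt w d u :=
    ((hw.differentiable one_ne_zero) u).hasDerivAt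
  have hWU : HasFDerivAt (fun q : ℝ × ℝ => w (q.2 - c * Real.sin q.1))
      (d • (ContinuousLinearMap.snd ℝ ℝ ℝ
        - c • ((Real.cos p.1) • ContinuousLinearMap.fst ℝ ℝ ℝ))) p :=
    hwdiff.comp_hasFDerivAt p hU
  have hV1 : HasFDerivAt (fun q : ℝ × ℝ => (1 / σ₀) * (Real.cos q.1 - 1))
      ((1 / σ₀) • ((-Real.sin p.1) • ContinuousLinearMap.fst ℝ ℝ ℝ)) p :=
    (hcos.sub_const 1).const_mul (1 / σ₀)
  have hVF : HasFDerivAt V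
      ((1 / σ₀) • ((-Real.sin p.1) • ContinuousLinearMap.fst ℝ ℝ ℝ)
        + d • (ContinuousLinearMap.snd ℝ ℝ ℝ
          - c • ((Real.cos p.1) • ContinuousLinearMap.fst ℝ ℝ ℝ))) p := by
    rw [hVfun]; exact hV1.add hWU
  have hfd := hVF.fderiv
  have hpdth : pdth V p = (1 / σ₀) * (-Real.sin p.1) + d * (-(c * Real.cos p.1)) := by
    simp [pdth, hfd]
  have hpdx : pdx V p = d := by
    simp [pdx, hfd]
  rw [hpdth, hpdx, hg11, hg12, hg22, hc]
  field_simp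
  ring
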